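/- (Theorem 1 of the paper, discrete form.) In a γ-discounted finite MDP, let Q*(s,u) be the optimal action-value and suppose Q̃(s,u) = Q(s, u | z̃(s)) where: (i) |Q(s,u|z) - Q*(s,u)| ≤ κ whenever z = f(s) is the 'fresh' strategy, (ii) Q(s,u|·) is coordinate-wise η-Lipschitz over n strategy coordinates, and (iii) the used strategy z̃(s) satisfies ‖z̃^a(s) - f(s)^a‖ ≤ β for every coordinate a. Then the value Ṽ of the policy greedy with respect to Q̃ satisfies ‖V*(s) - Ṽ(s)‖_∞ ≤ 2(n·η·β + κ)/(1-γ). -/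
import Mathlib


open Finset

/-- Theorem 1 of the paper (discrete form): with approximation error `κ` at fresh
strategies, coordinate-wise Lipschitz constant `η` in strategies, and used strategies
within `β` of the fresh ones in every coordinate, the value of the greedy policy w.r.t.
`Q̃(s,u) = Q(s,u | z̃(s))` satisfies `‖V* - Ṽ‖_∞ ≤ 2(nηβ + κ)/(1-γ)`. -/
theorem stmt6 {S U : Type*} [Fintype S] [Nonempty S] [Fintype U] [Nonempty U]
    {Z : Type*} [NormedAddCommGroup Z] [NormedSpace ℝ Z]
    (n : ℕ) (γ η β κ : ℝ) (hγ0 : 0 ≤ γ) (hγ1 : γ < 1)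
    (hη : 0 ≤ η) (hβ : 0 ≤ β) (hκ : 0 ≤ κ)
    (P : S → U → S → ℝ) (hP0 : ∀ s u s', 0 ≤ P s u s') (hP1 : ∀ s u, ∑ s', P s u s' = 1)
    (r : S → U → ℝ)
    (Qstar : S → U → ℝ) (Vstar : S → ℝ)
    (hV : ∀ s, Vstar s = univ.sup' univ_nonempty (Qstar s))
    (hBell : ∀ s u, Qstar s u = r s u + γ * ∑ s', P s u s' * Vstar s')
    (Q : S → U → (Fin n → Z) → ℝ) (f : S → Fin n → Z) (ztil : S → Fin n → Z)
    (hκQ : ∀ s u, |Q s u (f s) - Qstar s u| ≤ κ)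
    (hLip : ∀ (s : S) (u : U) (z : Fin n → Z) (a : Fin n) (z₁ z₂ : Z),
      |Q s u (Function.update z a z₁) - Q s u (Function.update z a z₂)| ≤ η * ‖z₁ - z₂‖)
    (hstale : ∀ s a, ‖ztil s a - f s a‖ ≤ β)
    (π : S → U) (hπ : ∀ s u, Q s u (ztil s) ≤ Q s (π s) (ztil s))
    (Vtil : S → ℝ)
    (hVtil : ∀ s, Vtil s = r s (π s) + γ * ∑ s', P s (π s) s' * Vtil s') :
    ∀ s, |Vstar s - Vtil s| ≤ 2 * (n * η * β + κ) / (1 - γ) := by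
  classical
  set ε : ℝ := ↑n * η * β + κ with hε
  have hεnn : 0 ≤ ε := by positivity
  have hγd : 0 < 1 - γ := by linarith
  -- Step 1: staleness bound by coordinate telescoping
  have hstale' : ∀ s u, |Q s u (ztil s) - Q s u (f s)| ≤ ↑n * η * β := by
    intro s u
    set g : ℕ → Fin n → Z := fun k a => if (a : ℕ) < k then ztil s a else f s a with hg
    have key : ∀ k, k ≤ n → |Q s u (g k) - Q s u (g 0)| ≤ (k : ℝ) * (η * β) := by
      intro k
      induction k with
      | zero => intro _; simp
      | succ k ih =>
        intro hk1
        have hk : k < n := hk1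
        have ihk := ih (Nat.le_of_succ_le hk1)
        set a : Fin n := ⟨k, hk⟩ with ha
        have h1 : g (k + 1) = Function.update (g k) a (ztil s a) := by
          funext j
          rcases eq_or_ne j a with h | h
          · subst h; simp [hg, ha]
          · have hne : (j : ℕ) ≠ k := fun hc => h (Fin.ext hc)
            have hiff : ((j : ℕ) < k + 1) ↔ ((j : ℕ) < k) := by omega
            simp [hg, Function.update_of_ne h, hiff]
        have h2 : g k = Function.update (g k) a (f s a) := by
          have : g k a = f s a := by simp [hg, ha]
          rw [← this, Function.update_eq_self]
        have hstep : |Q s u (g (k + 1)) - Q s u (g k)| ≤ η * β := by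
          rw [h1]
          calc |Q s u (Function.update (g k) a (ztil s a)) - Q s u (g k)|
              = |Q s u (Function.update (g k) a (ztil s a))
                  - Q s u (Function.update (g k) a (f s a))| := by rw [← h2]
            _ ≤ η * ‖ztil s a - f s a‖ := hLip s u (g k) a _ _
            _ ≤ η * β := by
                exact mul_le_mul_of_nonneg_left (hstale s a) hη
        calc |Q s u (g (k + 1)) - Q s u (g 0)|
            ≤ |Q s u (g (k + 1)) - Q s u (g k)| + |Q s u (g k) - Q s u (g 0)| :=
              abs_sub_le _ _ _
          _ ≤ η * β + (k : ℝ) * (η * β) := add_le_add hstep ihk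
          _ = ((k + 1 : ℕ) : ℝ) * (η * β) := by push_cast; ring
    have hgn : g n = ztil s := by funext j; simp [hg, j.isLt]
    have hg0 : g 0 = f s := by funext j; simp [hg]
    have := key n le_rfl
    rw [hgn, hg0] at this
    calc |Q s u (ztil s) - Q s u (f s)| ≤ (n : ℝ) * (η * β) := this
      _ = ↑n * η * β := by ring
  -- Step 2: Q̃ approximates Q*
  have hQtil : ∀ s u, |Q s u (ztil s) - Qstar s u| ≤ ε := by
    intro s u
    calc |Q s u (ztil s) - Qstar s u|
        ≤ |Q s u (ztil s) - Q s u (f s)| + |Q s u (f s) - Qstar s u| := abs_sub_le _ _ _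
      _ ≤ ↑n * η * β + κ := add_le_add (hstale' s u) (hκQ s u)
  -- Step 3: the performance bound
  set M : ℝ := (univ : Finset S).sup' univ_nonempty (fun s => |Vstar s - Vtil s|) with hM
  have hle : ∀ s, |Vstar s - Vtil s| ≤ M := fun s =>
    Finset.le_sup' (f := fun s => |Vstar s - Vtil s|) (mem_univ s)
  have hsum : ∀ s, γ * ∑ s', P s (π s) s' * (Vstar s' - Vtil s') ≤ γ * M := by
    intro s
    apply mul_le_mul_of_nonneg_left _ hγ0
    calc ∑ s', P s (π s) s' * (Vstar s' - Vtil s')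
        ≤ ∑ s', P s (π s) s' * M := by
          apply Finset.sum_le_sum
          intro i _
          exact mul_le_mul_of_nonneg_left
            (le_trans (le_abs_self _) (hle i)) (hP0 s (π s) i)
      _ = M := by rw [← Finset.sum_mul, hP1, one_mul]
  have hsum' : ∀ s, γ * ∑ s', P s (π s) s' * (Vtil s' - Vstar s') ≤ γ * M := by
    intro s
    apply mul_le_mul_of_nonneg_left _ hγ0
    calc ∑ s', P s (π s) s' * (Vtil s' - Vstar s')
        ≤ ∑ s', P s (π s) s' * M := by
          apply Finset.sum_le_sum
          intro i _
          refine mul_le_mul_of_nonneg_left ?_ (hP0 s (π s) i)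
          calc Vtil i - Vstar i ≤ |Vtil i - Vstar i| := le_abs_self _
            _ = |Vstar i - Vtil i| := abs_sub_comm _ _
            _ ≤ M := hle i
      _ = M := by rw [← Finset.sum_mul, hP1, one_mul]
  have hdiff : ∀ s, Qstar s (π s) - Vtil s
      = γ * ∑ s', P s (π s) s' * (Vstar s' - Vtil s') := by
    intro s
    have hsplit : ∑ s', P s (π s) s' * (Vstar s' - Vtil s')
        = ∑ s', P s (π s) s' * Vstar s' - ∑ s', P s (π s) s' * Vtil s' := by
      rw [← Finset.sum_sub_distrib]
      exact Finset.sum_congr rfl (fun i _ => mul_sub _ _ _)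
    rw [hBell s (π s), hVtil s, hsplit]; ring
  have hpt : ∀ s, |Vstar s - Vtil s| ≤ 2 * ε + γ * M := by
    intro s
    rw [abs_sub_le_iff]
    constructor
    · obtain ⟨u, -, hu⟩ := Finset.exists_mem_eq_sup' (univ_nonempty (α := U)) (Qstar s)
      have h1 : Vstar s = Qstar s u := by rw [hV s, hu]
      have h2 : Qstar s u ≤ Q s u (ztil s) + ε := by
        have := abs_le.mp (hQtil s u); linarith [this.1]
      have h3 : Q s (π s) (ztil s) ≤ Qstar s (π s) + ε := by
        have := abs_le.mp (hQtil s (π s)); linarith [this.2]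
      have h4 : Qstar s (π s) - Vtil s ≤ γ * M := by
        rw [hdiff s]; exact hsum s
      have h5 := hπ s u
      linarith
    · have h4 : Vtil s - Qstar s (π s) ≤ γ * M := by
        have : Vtil s - Qstar s (π s)
            = γ * ∑ s', P s (π s) s' * (Vtil s' - Vstar s') := by
          have := hdiff s
          have hsplit : ∑ s', P s (π s) s' * (Vtil s' - Vstar s')
              = -∑ s', P s (π s) s' * (Vstar s' - Vtil s') := by
            rw [← Finset.sum_neg_distrib]
            exact Finset.sum_congr rfl (fun i _ => by ring)
          rw [hsplit]; linarith
        rw [this]; exact hsum' s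
      have h5 : Qstar s (π s) ≤ Vstar s := by
        rw [hV s]; exact Finset.le_sup' (Qstar s) (mem_univ (π s))
      linarith
  have hMb : M ≤ 2 * ε + γ * M := by
    obtain ⟨s0, -, hs0⟩ := Finset.exists_mem_eq_sup' (univ_nonempty (α := S))
      (fun s => |Vstar s - Vtil s|)
    calc M = |Vstar s0 - Vtil s0| := hs0
      _ ≤ 2 * ε + γ * M := hpt s0
  have hMfin : M ≤ 2 * ε / (1 - γ) := by
    rw [le_div_iff₀ hγd]; nlinarith
  intro s
  calc |Vstar s - Vtil s| ≤ M := hle s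
    _ ≤ 2 * ε / (1 - γ) := hMfin
    _ = 2 * (↑n * η * β + κ) / (1 - γ) := by rw [hε]
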